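/- For every n ≥ 1 and every permutation π ∈ S_n avoiding 312, the union LMAX(π) ∪ DESB(π) equals [n], where LMAX(π) is the set of values of left-to-right maxima and DESB(π) the set of descent bottoms. -/

import Mathlib

open Finset
open scoped Classical

/-- Number of components of a permutation of `Fin n` (0-based version of
`|{i ∈ [n] : π(j) ≤ i for all j ≤ i}|`). -/
def comps {n : ℕ} (π : Equiv.Perm (Fin n)) : ℕ :=
  (Finset.univ.filter fun i : Fin n => ∀ j, j ≤ i → π j ≤ i).card

/-- Number of descents. -/
def des {n : ℕ} (π : Equiv.Perm (Fin n)) : ℕ :=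
  (Finset.univ.filter fun i : Fin n =>
    ∃ h : (i : ℕ) + 1 < n, π ⟨(i : ℕ) + 1, h⟩ < π i).card

/-- Length of the initial ascending run: `min(DES(π) ∪ {n})` with 1-based descent positions. -/
noncomputable def iar {n : ℕ} (π : Equiv.Perm (Fin n)) : ℕ :=
  sInf {k : ℕ | k = n ∨ 0 < k ∧ ∃ h : k < n, π ⟨k, h⟩ < π ⟨k - 1, by omega⟩}

/-- `π` contains the pattern `σ`. -/
def ContainsPat {n m : ℕ} (π : Equiv.Perm (Fin n)) (σ : Equiv.Perm (Fin m)) : Prop :=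
  ∃ f : Fin m → Fin n, StrictMono f ∧ ∀ a b : Fin m, σ a < σ b ↔ π (f a) < π (f b)

/-- `π` avoids the pattern `σ`. -/
def AvoidsPat {n m : ℕ} (π : Equiv.Perm (Fin n)) (σ : Equiv.Perm (Fin m)) : Prop :=
  ¬ ContainsPat π σ

def pat123 : Equiv.Perm (Fin 3) := ⟨![0, 1, 2], ![0, 1, 2], by decide, by decide⟩
def pat132 : Equiv.Perm (Fin 3) := ⟨![0, 2, 1], ![0, 2, 1], by decide, by decide⟩
def pat213 : Equiv.Perm (Fin 3) := ⟨![1, 0, 2], ![1, 0, 2], by decide, by decide⟩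
def pat231 : Equiv.Perm (Fin 3) := ⟨![1, 2, 0], ![2, 0, 1], by decide, by decide⟩
def pat312 : Equiv.Perm (Fin 3) := ⟨![2, 0, 1], ![1, 2, 0], by decide, by decide⟩
def pat321 : Equiv.Perm (Fin 3) := ⟨![2, 1, 0], ![2, 1, 0], by decide, by decide⟩

/-- Direct sum of two permutations. -/
def directSum {m l : ℕ} (π : Equiv.Perm (Fin m)) (σ : Equiv.Perm (Fin l)) :
    Equiv.Perm (Fin (m + l)) :=
  finSumFinEquiv.permCongr (Equiv.sumCongr π σ)

/-- Direct sum of a finite family of permutations. -/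
def dsum : {k : ℕ} → (a : Fin k → ℕ) → ((i : Fin k) → Equiv.Perm (Fin (a i))) →
    Equiv.Perm (Fin (∑ i, a i))
  | 0, _, _ => Equiv.refl _
  | _ + 1, a, τ =>
      (finCongr (Fin.sum_univ_succ a).symm).permCongr
        (directSum (τ 0) (dsum (fun i => a i.succ) (fun i => τ i.succ)))

/-- Set of values of left-to-right maxima. -/
noncomputable def LMAX {n : ℕ} (π : Equiv.Perm (Fin n)) : Finset (Fin n) :=
  Finset.univ.filter fun v => ∃ i, π i = v ∧ ∀ j, j < i → π j < v

/-- Set of values of left-to-right minima. -/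
noncomputable def LMIN {n : ℕ} (π : Equiv.Perm (Fin n)) : Finset (Fin n) :=
  Finset.univ.filter fun v => ∃ i, π i = v ∧ ∀ j, j < i → v < π j

/-- Set of descent bottoms. -/
noncomputable def DESB {n : ℕ} (π : Equiv.Perm (Fin n)) : Finset (Fin n) :=
  Finset.univ.filter fun v => ∃ i : ℕ, ∃ h : i + 1 < n,
    π ⟨i + 1, h⟩ = v ∧ π ⟨i + 1, h⟩ < π ⟨i, by omega⟩

/-- for a 312-avoiding permutation, every value is a left-to-right
maximum or a descent bottom: `LMAX(π) ∪ DESB(π) = [n]`. -/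
theorem lmax_union_desb_312 (n : ℕ) (hn : 1 ≤ n) (π : Equiv.Perm (Fin n))
    (h : AvoidsPat π pat312) :
    LMAX π ∪ DESB π = Finset.univ := by
  ext v
  simp only [Finset.mem_union, Finset.mem_univ, iff_true, LMAX, DESB, Finset.mem_filter,
    true_and]
  by_contra hc
  push_neg at hc
  obtain ⟨hL, hD⟩ := hc
  set i : Fin n := π.symm v with hi
  have hπi : π i = v := π.apply_symm_apply v
  obtain ⟨j, hji, hjv⟩ := hL i hπi
  have hji' : (j : ℕ) < (i : ℕ) := Fin.lt_def.mp hji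
  have hipos : 0 < (i : ℕ) := by omega
  have hin : (i : ℕ) - 1 + 1 < n := by have := i.isLt; omega
  have hieq : (⟨(i : ℕ) - 1 + 1, hin⟩ : Fin n) = i := by
    apply Fin.ext; simp; omega
  have hnd := hD ((i : ℕ) - 1) hin
  rw [hieq] at hnd
  have hle := hnd hπi
  rw [hπi] at hle
  have hne : π (⟨(i : ℕ) - 1, by omega⟩ : Fin n) ≠ v := by
    intro he
    have h2 : (⟨(i : ℕ) - 1, by omega⟩ : Fin n) = i := π.injective (he.trans hπi.symm)
    have := Fin.val_eq_of_eq h2; simp at this; omega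
  have hπ1 : π (⟨(i : ℕ) - 1, by omega⟩ : Fin n) < π i := by
    rw [hπi]; exact lt_of_le_of_ne hle hne
  have hπ2 : π i < π j := by
    rw [hπi]
    rcases lt_or_eq_of_le hjv with h1 | h1
    · exact h1
    · exfalso
      have : j = i := π.injective (by rw [hπi, ← h1])
      exact absurd hji (by simp [this])
  have hπ3 : π (⟨(i : ℕ) - 1, by omega⟩ : Fin n) < π j := hπ1.trans hπ2
  have hjlt : (j : ℕ) < (i : ℕ) - 1 := by
    have hj1 : j ≠ (⟨(i : ℕ) - 1, by omega⟩ : Fin n) := by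
      intro he; rw [← he] at hπ3; exact absurd hπ3 (lt_irrefl _)
    have hv := Fin.val_ne_of_ne hj1
    simp at hv; omega
  apply h
  refine ⟨fun a => if (a : ℕ) = 0 then j else
    if (a : ℕ) = 1 then (⟨(i : ℕ) - 1, by omega⟩ : Fin n) else i, ?_, ?_⟩
  · intro a b hab
    have hab' := Fin.lt_def.mp hab
    fin_cases a <;> fin_cases b <;> norm_num at hab' <;> norm_num <;>
      rw [Fin.lt_def] <;> simp <;> omega
  · intro a b
    fin_cases a <;> fin_cases b <;> norm_num
    · exact iff_of_false (by decide) (asymm hπ3)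
    · exact iff_of_false (by decide) (asymm hπ2)
    · exact iff_of_true (by decide) hπ3
    · exact iff_of_true (by decide) hπ1
    · exact iff_of_true (by decide) hπ2
    · exact iff_of_false (by decide) (asymm hπ1)
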